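/- arXiv:2111.10514 — 2 statements merged into one kernel-verified Lean document; each statement's English description precedes it below -/
import Mathlib

section
/- Let K_{1,m} be a star subgraph of FQ_n with n ≥ 4 and 2 ≤ m ≤ n+1. If u is a vertex of FQ_n not in K_{1,m}, then u has at most 2 neighbors among the vertices of K_{1,m}, and u has exactly 2 such neighbors only if both of these neighbors are leaves of the star. -/
/-- Number of coordinates in which two vertices of the cube differ (Hamming distance). -/
def diffCount {n : ℕ} (x y : Fin n → Bool) : ℕ :=
  (Finset.univ.filter fun i => x i ≠ y i).card

lemma diffCount_comm {n : ℕ} (x y : Fin n → Bool) : diffCount x y = diffCount y x := by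
  unfold diffCount
  congr 1
  apply Finset.filter_congr
  intro i _
  exact ne_comm

/-- The `n`-dimensional hypercube. -/
def Qn (n : ℕ) : SimpleGraph (Fin n → Bool) where
  Adj x y := diffCount x y = 1
  symm := ⟨by intro x y h; rw [diffCount_comm]; exact h⟩
  loopless := ⟨by intro x h; simp [diffCount] at h⟩

/-- The `n`-dimensional folded hypercube. -/
def FQn (n : ℕ) : SimpleGraph (Fin n → Bool) where
  Adj x y := x ≠ y ∧ (diffCount x y = 1 ∨ diffCount x y = n)
  symm := by
    constructor
    rintro x y ⟨h1, h2⟩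
    exact ⟨h1.symm, by rw [diffCount_comm]; exact h2⟩
  loopless := ⟨fun x h => h.1 rfl⟩

/-- Flip bit `i` (hypercube neighbour `u^{i+1}` in 1-based notation). -/
def hFlip {n : ℕ} (u : Fin n → Bool) (i : Fin n) : Fin n → Bool :=
  fun j => if j = i then !(u j) else u j

/-- Flip bits `0,…,i` (complement neighbour `ū^{i+1}` in 1-based notation). -/
def cFlip {n : ℕ} (u : Fin n → Bool) (i : Fin n) : Fin n → Bool :=
  fun j => if j ≤ i then !(u j) else u j

lemma hFlip_hFlip {n : ℕ} (u : Fin n → Bool) (i : Fin n) : hFlip (hFlip u i) i = u := by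
  funext j; simp only [hFlip]; split <;> simp

lemma cFlip_cFlip {n : ℕ} (u : Fin n → Bool) (i : Fin n) : cFlip (cFlip u i) i = u := by
  funext j; simp only [cFlip]; split <;> simp

/-- The `n`-dimensional augmented cube. -/
def AQn (n : ℕ) : SimpleGraph (Fin n → Bool) where
  Adj x y := x ≠ y ∧ ((∃ i, y = hFlip x i) ∨ (∃ i : Fin n, 1 ≤ i.val ∧ y = cFlip x i))
  symm := by
    constructor
    rintro x y ⟨h1, h2⟩
    refine ⟨h1.symm, ?_⟩
    rcases h2 with ⟨i, rfl⟩ | ⟨i, hi, rfl⟩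
    · exact Or.inl ⟨i, (hFlip_hFlip x i).symm⟩
    · exact Or.inr ⟨i, hi, (cFlip_cFlip x i).symm⟩
  loopless := ⟨fun x h => h.1 rfl⟩

open Finset in
open scoped symmDiff in
private lemma my_dset_tri {n : ℕ} (x y z : Fin n → Bool) :
    (univ.filter fun i => x i ≠ z i) =
      (univ.filter fun i => x i ≠ y i) ∆ (univ.filter fun i => y i ≠ z i) := by
  ext i
  simp only [mem_filter, mem_univ, true_and, Finset.mem_symmDiff]
  cases x i <;> cases y i <;> cases z i <;> simp

open Finset in
private lemma my_dset_comm {n : ℕ} (x y : Fin n → Bool) :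
    (univ.filter fun i => x i ≠ y i) = (univ.filter fun i => y i ≠ x i) := by
  ext i; simp [ne_comm]

open Finset in
private lemma my_adj_cases {n : ℕ} {u x : Fin n → Bool} (h : (FQn n).Adj u x) :
    (∃ k, univ.filter (fun i => u i ≠ x i) = {k}) ∨
      univ.filter (fun i => u i ≠ x i) = univ := by
  rcases h.2 with h2 | h2
  · exact Or.inl (Finset.card_eq_one.mp h2)
  · exact Or.inr (Finset.eq_univ_of_card _ (by simpa [diffCount] using h2))

open Finset in
private lemma my_adj_card {n : ℕ} {u x : Fin n → Bool} (h : (FQn n).Adj u x) :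
    (univ.filter (fun i => u i ≠ x i)).card = 1 ∨
      (univ.filter (fun i => u i ≠ x i)).card = n := h.2

open Finset in
private lemma my_eq_hFlip {n : ℕ} {u x : Fin n → Bool} {k : Fin n}
    (h : univ.filter (fun i => u i ≠ x i) = {k}) : x = hFlip u k := by
  funext j
  have hj : u j ≠ x j ↔ j = k := by
    rw [← Finset.mem_singleton, ← h, mem_filter]
    simp
  by_cases hc : j = k
  · subst hc
    have h2 := hj.2 rfl
    simp only [hFlip, if_pos rfl]
    cases hu : u j <;> cases hx : x j <;> simp_all
  · have h2 : ¬ u j ≠ x j := fun h' => hc (hj.1 h')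
    simp only [hFlip, if_neg hc]
    cases hu : u j <;> cases hx : x j <;> simp_all

open Finset in
private lemma my_eq_compl {n : ℕ} {u x : Fin n → Bool}
    (h : univ.filter (fun i => u i ≠ x i) = univ) : x = fun i => !(u i) := by
  funext j
  have hmem : j ∈ univ.filter (fun i => u i ≠ x i) := by rw [h]; exact mem_univ j
  have h2 : u j ≠ x j := (mem_filter.1 hmem).2
  cases hu : u j <;> cases hx : x j <;> simp_all

open Finset in
private lemma my_eq_of_empty {n : ℕ} {u x : Fin n → Bool}
    (h : univ.filter (fun i => u i ≠ x i) = ∅) : u = x := by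
  funext j
  have h2 := Finset.eq_empty_iff_forall_notMem.1 h j
  simp only [mem_filter, mem_univ, true_and] at h2
  cases hu : u j <;> cases hx : x j <;> simp_all

open Finset in
open scoped symmDiff in
private lemma my_no_triangle {n : ℕ} (hn : 4 ≤ n) {a b x : Fin n → Bool}
    (hab : (FQn n).Adj a b) (hax : (FQn n).Adj a x) (hbx : (FQn n).Adj b x) : False := by
  have htri : (univ.filter fun i => a i ≠ b i)
      = (univ.filter fun i => a i ≠ x i) ∆ (univ.filter fun i => b i ≠ x i) := by
    rw [my_dset_tri a x b, my_dset_comm x b]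
  have hcab := my_adj_card hab
  rcases my_adj_cases hax with ⟨k, hk⟩ | hk <;> rcases my_adj_cases hbx with ⟨m, hm⟩ | hm
  · rw [hk, hm] at htri
    by_cases hkm : k = m
    · subst hkm
      rw [symmDiff_self] at htri
      exact hab.1 (my_eq_of_empty htri)
    · have h2 : (({k} : Finset (Fin n)) ∆ {m}) = {k, m} := by
        ext y; simp [Finset.mem_symmDiff]; aesop
      rw [h2] at htri
      have h3 : ({k, m} : Finset (Fin n)).card = 2 := Finset.card_pair hkm
      rw [htri, h3] at hcab
      omega
  · rw [hk, hm, symmDiff_comm] at htri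
    have h2 : (univ ∆ ({k} : Finset (Fin n))) = ({k} : Finset (Fin n))ᶜ := by
      ext y; simp [Finset.mem_symmDiff]
    rw [h2] at htri
    have h3 : (({k} : Finset (Fin n))ᶜ).card = n - 1 := by
      rw [Finset.card_compl]; simp
    rw [htri, h3] at hcab
    omega
  · rw [hk, hm] at htri
    have h2 : (univ ∆ ({m} : Finset (Fin n))) = ({m} : Finset (Fin n))ᶜ := by
      ext y; simp [Finset.mem_symmDiff]
    rw [h2] at htri
    have h3 : (({m} : Finset (Fin n))ᶜ).card = n - 1 := by
      rw [Finset.card_compl]; simp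
    rw [htri, h3] at hcab
    omega
  · rw [hk, hm, symmDiff_self] at htri
    exact hab.1 (my_eq_of_empty htri)

open Finset in
open scoped symmDiff in
private lemma my_common {n : ℕ} (hn : 4 ≤ n) {u c : Fin n → Bool} (huc : u ≠ c) :
    ∃ a b : Fin n → Bool, ∀ x, (FQn n).Adj u x → (FQn n).Adj c x → x = a ∨ x = b := by
  by_cases hd : (univ.filter fun i => u i ≠ c i).card = 2
  · obtain ⟨p, q, hpq, hset⟩ := Finset.card_eq_two.1 hd
    refine ⟨hFlip u p, hFlip u q, fun x hux hcx => ?_⟩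
    have htri : (univ.filter fun i => u i ≠ c i)
        = (univ.filter fun i => u i ≠ x i) ∆ (univ.filter fun i => c i ≠ x i) := by
      rw [my_dset_tri u x c, my_dset_comm x c]
    have hcxcard := my_adj_card hcx
    rcases my_adj_cases hux with ⟨k, hk⟩ | hk
    · -- D(c,x) = {k} ∆ D(u,c)
      have hDcx : (univ.filter fun i => c i ≠ x i) = ({k} : Finset (Fin n)) ∆ (univ.filter fun i => u i ≠ c i) := by
        rw [htri, hk, symmDiff_symmDiff_cancel_left]
      by_cases hkm : k ∈ (univ.filter fun i => u i ≠ c i)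
      · rw [hset] at hkm
        simp only [mem_insert, mem_singleton] at hkm
        rcases hkm with rfl | rfl
        · exact Or.inl (my_eq_hFlip hk)
        · exact Or.inr (my_eq_hFlip hk)
      · exfalso
        rw [hset] at hkm
        simp only [mem_insert, mem_singleton, not_or] at hkm
        have h3 : (univ.filter fun i => c i ≠ x i) = {k, p, q} := by
          rw [hDcx, hset]
          ext y
          simp only [Finset.mem_symmDiff, mem_singleton, mem_insert]
          constructor
          · rintro (⟨rfl, -⟩ | ⟨h1, h2⟩) <;> tauto
          · rintro (rfl | rfl | rfl) <;> [skip; skip; skip] <;> first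
              | exact Or.inl ⟨rfl, by tauto⟩
              | exact Or.inr ⟨by tauto, fun h => by tauto⟩
        have h4 : ({k, p, q} : Finset (Fin n)).card = 3 := by
          rw [Finset.card_insert_of_notMem (by simp [hkm.1, hkm.2]),
            Finset.card_pair hpq]
        rw [h3, h4] at hcxcard
        omega
    · exfalso
      have hDcx : (univ.filter fun i => c i ≠ x i) = (Finset.univ : Finset (Fin n)) ∆ (univ.filter fun i => u i ≠ c i) := by
        rw [htri, hk, symmDiff_symmDiff_cancel_left]
      have hDcx2 : (univ.filter fun i => c i ≠ x i) = (univ.filter fun i => u i ≠ c i)ᶜ := by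
        rw [hDcx]; ext y; simp [Finset.mem_symmDiff]
      have h4 : ((univ.filter fun i => u i ≠ c i)ᶜ).card = n - 2 := by
        rw [Finset.card_compl, hd]; simp
      rw [hDcx2, h4] at hcxcard
      omega
  · refine ⟨fun i => !(u i), fun i => !(c i), fun x hux hcx => ?_⟩
    rcases my_adj_cases hux with ⟨k, hk⟩ | hk
    · rcases my_adj_cases hcx with ⟨m, hm⟩ | hm
      · exfalso
        have htri : (univ.filter fun i => u i ≠ c i)
            = (univ.filter fun i => u i ≠ x i) ∆ (univ.filter fun i => c i ≠ x i) := by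
          rw [my_dset_tri u x c, my_dset_comm x c]
        rw [hk, hm] at htri
        by_cases hkm : k = m
        · subst hkm
          rw [symmDiff_self] at htri
          exact huc (my_eq_of_empty htri)
        · have h2 : (({k} : Finset (Fin n)) ∆ {m}) = {k, m} := by
            ext y; simp [Finset.mem_symmDiff]; aesop
          rw [h2] at htri
          exact hd (by rw [htri]; exact Finset.card_pair hkm)
      · exact Or.inr (my_eq_compl hm)
    · exact Or.inl (my_eq_compl hk)
/-- a vertex outside a star `K_{1,m}` in `FQ_n` (`n ≥ 4`, `2 ≤ m ≤ n+1`)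
has at most two neighbours on the star, and if it has exactly two then both are leaves. -/
theorem stmt5 (n m : ℕ) (hn : 4 ≤ n) (hm1 : 2 ≤ m) (hm2 : m ≤ n + 1)
    (c : Fin n → Bool) (l : Fin m → Fin n → Bool)
    (hinj : Function.Injective l) (hadj : ∀ i, (FQn n).Adj c (l i))
    (u : Fin n → Bool) (huc : u ≠ c) (hul : ∀ i, u ≠ l i) :
    ((FQn n).neighborSet u ∩ ({c} ∪ Set.range l)).ncard ≤ 2 ∧
    (((FQn n).neighborSet u ∩ ({c} ∪ Set.range l)).ncard = 2 →
      (FQn n).neighborSet u ∩ ({c} ∪ Set.range l) ⊆ Set.range l) := by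
  by_cases hadjuc : (FQn n).Adj u c
  · have hT : (FQn n).neighborSet u ∩ ({c} ∪ Set.range l) = {c} := by
      ext x
      simp only [Set.mem_inter_iff, SimpleGraph.mem_neighborSet, Set.mem_union,
        Set.mem_singleton_iff, Set.mem_range]
      constructor
      · rintro ⟨hx, rfl | ⟨i, rfl⟩⟩
        · rfl
        · exact absurd (my_no_triangle hn hadjuc hx (hadj i)) not_false
      · rintro rfl; exact ⟨hadjuc, Or.inl rfl⟩
    rw [hT]
    constructor
    · simp
    · intro h2; simp at h2
  · obtain ⟨a, b, hab⟩ := my_common hn huc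
    have hsubl : (FQn n).neighborSet u ∩ ({c} ∪ Set.range l) ⊆ Set.range l := by
      rintro x ⟨hx, hx2 | hx2⟩
      · exact absurd (hx2 ▸ hx) hadjuc
      · exact hx2
    have hsub : (FQn n).neighborSet u ∩ ({c} ∪ Set.range l) ⊆ ({a, b} : Set (Fin n → Bool)) := by
      intro x hx
      obtain ⟨i, rfl⟩ := hsubl hx
      rcases hab _ hx.1 (hadj i) with h | h
      · exact Or.inl h
      · exact Or.inr h
    have hle : ((FQn n).neighborSet u ∩ ({c} ∪ Set.range l)).ncard ≤ 2 := by
      refine le_trans (Set.ncard_le_ncard hsub (Set.toFinite _)) ?_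
      refine le_trans (Set.ncard_insert_le a {b}) ?_
      simp
    exact ⟨hle, fun _ => hsubl⟩
end

section
/- In AQ_n (n ≥ 2), for a complement edge u ū^i with 2 ≤ i ≤ n−1, the common neighbors of u and ū^i are exactly {u^i, u^{i+1}, ū^{i+1}, ū^{i−1}}, while for i = n they are exactly {ū^{n−1}, u^n}. -/
namespace T
variable {n : ℕ}
def eqp (j : Fin n) : Fin n → Bool := fun l => decide (l = j)
def lep (j : Fin n) : Fin n → Bool := fun l => decide (l ≤ j)
def xorf (p q : Fin n → Bool) : Fin n → Bool := fun l => xor (p l) (q l)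
def fb (p u : Fin n → Bool) : Fin n → Bool := fun l => xor (p l) (u l)

lemma fb_inj {p q u : Fin n → Bool} : fb p u = fb q u ↔ p = q := by
  constructor
  · intro h; funext l
    have h2 := congrFun h l
    simp only [fb] at h2
    cases u l <;> simpa using h2
  · rintro rfl; rfl

lemma fb_fb (p q u : Fin n → Bool) : fb q (fb p u) = fb (xorf q p) u := by
  funext l; simp [fb, xorf, Bool.xor_assoc]

lemma xorf_invol (p q : Fin n → Bool) : xorf (xorf p q) q = p := by
  funext l; simp [xorf, Bool.xor_assoc]

lemma hFlip_eq (u : Fin n → Bool) (j : Fin n) : hFlip u j = fb (eqp j) u := by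
  funext l; simp only [hFlip, fb, eqp]
  by_cases h : l = j <;> simp [h]

lemma cFlip_eq (u : Fin n → Bool) (j : Fin n) : cFlip u j = fb (lep j) u := by
  funext l; simp only [cFlip, fb, lep]
  by_cases h : l ≤ j <;> simp [h]

def A (p : Fin n → Bool) : Prop :=
  (∃ j, p = eqp j) ∨ (∃ j : Fin n, 1 ≤ j.val ∧ p = lep j)

lemma lep_eq_eqp {j : Fin n} (hj : j.val = 0) : lep j = eqp j := by
  funext l
  simp only [lep, eqp]
  rw [decide_eq_decide, Fin.le_def, Fin.ext_iff]
  omega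

lemma A_eqp (j : Fin n) : A (eqp j) := Or.inl ⟨j, rfl⟩

lemma A_lep (j : Fin n) : A (lep j) := by
  rcases Nat.eq_zero_or_pos j.val with h | h
  · exact Or.inl ⟨j, lep_eq_eqp h⟩
  · exact Or.inr ⟨j, h, rfl⟩

lemma fb_ne_self {p u : Fin n → Bool} (hA : A p) : fb p u ≠ u := by
  intro h
  have h0 : fb (fun _ => false) u = u := by funext l; simp [fb]
  have hp : ∀ l, p l = false := by
    have := fb_inj.mp (h.trans h0.symm)
    intro l; exact congrFun this l
  rcases hA with ⟨j, rfl⟩ | ⟨j, hj, rfl⟩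
  · have := hp j; simp [eqp] at this
  · have := hp ⟨0, Nat.lt_of_le_of_lt (Nat.zero_le _) j.isLt⟩
    simp only [lep, decide_eq_false_iff_not, Fin.le_def] at this
    exact this (Nat.zero_le _)

lemma mem_nbr (u v : Fin n → Bool) :
    v ∈ (AQn n).neighborSet u ↔ ∃ p, A p ∧ v = fb p u := by
  have : (AQn n).Adj u v ↔
      (u ≠ v ∧ ((∃ i, v = hFlip u i) ∨ (∃ i : Fin n, 1 ≤ i.val ∧ v = cFlip u i))) := Iff.rfl
  rw [SimpleGraph.mem_neighborSet, this]
  constructor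
  · rintro ⟨hne, ⟨j, rfl⟩ | ⟨j, hj, rfl⟩⟩
    · exact ⟨eqp j, A_eqp j, hFlip_eq u j⟩
    · exact ⟨lep j, A_lep j, cFlip_eq u j⟩
  · rintro ⟨p, hA, rfl⟩
    refine ⟨fun h => fb_ne_self hA h.symm, ?_⟩
    rcases hA with ⟨j, rfl⟩ | ⟨j, hj, rfl⟩
    · exact Or.inl ⟨j, (hFlip_eq u j).symm⟩
    · exact Or.inr ⟨j, hj, (cFlip_eq u j).symm⟩

lemma mem_inter (u v : Fin n → Bool) (i : Fin n) :
    v ∈ (AQn n).neighborSet u ∩ (AQn n).neighborSet (fb (lep i) u) ↔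
      ∃ p, A p ∧ A (xorf p (lep i)) ∧ v = fb p u := by
  rw [Set.mem_inter_iff, mem_nbr, mem_nbr]
  constructor
  · rintro ⟨⟨p, hp, rfl⟩, ⟨q, hq, hv⟩⟩
    rw [fb_fb] at hv
    have hpq := fb_inj.mp hv
    refine ⟨p, hp, ?_, rfl⟩
    rw [hpq, xorf_invol]
    exact hq
  · rintro ⟨p, hp1, hp2, rfl⟩
    exact ⟨⟨p, hp1, rfl⟩, ⟨xorf p (lep i), hp2, by rw [fb_fb, xorf_invol]⟩⟩

lemma bool_step (P Q R : Prop) [Decidable P] [Decidable Q] [Decidable R] :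
    (xor (decide P) (decide Q) = decide R) ↔ ((P ↔ ¬Q) ↔ R) := by
  by_cases hP : P <;> by_cases hQ : Q <;> by_cases hR : R <;> simp [hP, hQ, hR]

lemma L1 {i j k : Fin n} :
    xorf (eqp j) (lep i) = eqp k ↔ (i.val = 1 ∧ j.val + k.val = 1) := by
  constructor
  · intro h
    have H : ∀ l : ℕ, l < n → (((l = j.val) ↔ ¬(l ≤ i.val)) ↔ l = k.val) := by
      intro l hl
      have hcl := congrFun h ⟨l, hl⟩
      simp only [xorf, eqp, lep] at hcl
      rw [bool_step] at hcl
      simpa [Fin.ext_iff, Fin.le_def] using hcl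
    have h0 := H 0 (Nat.lt_of_le_of_lt (Nat.zero_le _) i.isLt)
    have hii := H i.val i.isLt
    have hjj := H j.val j.isLt
    have hkk := H k.val k.isLt
    have h1 : 1 < n → _ := fun hh => H 1 hh
    have h2 : 2 < n → _ := fun hh => H 2 hh
    have hb1 := i.isLt; have hb2 := j.isLt; have hb3 := k.isLt
    omega
  · rintro ⟨h1, h2⟩
    funext l
    simp only [xorf, eqp, lep]
    rw [bool_step]
    have := l.isLt; have := j.isLt; have := k.isLt
    simp only [Fin.ext_iff, Fin.le_def]
    omega

lemma L2 {i j k : Fin n} :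
    xorf (eqp j) (lep i) = lep k ↔
      ((j.val = i.val ∧ k.val + 1 = i.val) ∨ (j.val = i.val + 1 ∧ k.val = j.val)) := by
  constructor
  · intro h
    have H : ∀ l : ℕ, l < n → (((l = j.val) ↔ ¬(l ≤ i.val)) ↔ l ≤ k.val) := by
      intro l hl
      have hcl := congrFun h ⟨l, hl⟩
      simp only [xorf, eqp, lep] at hcl
      rw [bool_step] at hcl
      simpa [Fin.ext_iff, Fin.le_def] using hcl
    have h0 := H 0 (Nat.lt_of_le_of_lt (Nat.zero_le _) i.isLt)
    have hii := H i.val i.isLt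
    have hjj := H j.val j.isLt
    have hkk := H k.val k.isLt
    have him := H (i.val - 1) (by have := i.isLt; omega)
    have hip : i.val + 1 < n → _ := fun hh => H (i.val + 1) hh
    have hkp : k.val + 1 < n → _ := fun hh => H (k.val + 1) hh
    have hb1 := i.isLt; have hb2 := j.isLt; have hb3 := k.isLt
    omega
  · intro h
    funext l
    simp only [xorf, eqp, lep]
    rw [bool_step]
    have := l.isLt; have := j.isLt; have := k.isLt; have := i.isLt
    simp only [Fin.ext_iff, Fin.le_def]
    omega

lemma L3 {i j k : Fin n} :
    xorf (lep j) (lep i) = eqp k ↔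
      ((j.val = i.val + 1 ∧ k.val = j.val) ∨ (j.val + 1 = i.val ∧ k.val = i.val)) := by
  constructor
  · intro h
    have H : ∀ l : ℕ, l < n → (((l ≤ j.val) ↔ ¬(l ≤ i.val)) ↔ l = k.val) := by
      intro l hl
      have hcl := congrFun h ⟨l, hl⟩
      simp only [xorf, eqp, lep] at hcl
      rw [bool_step] at hcl
      simpa [Fin.ext_iff, Fin.le_def] using hcl
    have hii := H i.val i.isLt
    have hjj := H j.val j.isLt
    have hkk := H k.val k.isLt
    have hip : i.val + 1 < n → _ := fun hh => H (i.val + 1) hh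
    have hip2 : i.val + 2 < n → _ := fun hh => H (i.val + 2) hh
    have hjp : j.val + 1 < n → _ := fun hh => H (j.val + 1) hh
    have hjp2 : j.val + 2 < n → _ := fun hh => H (j.val + 2) hh
    have hb1 := i.isLt; have hb2 := j.isLt; have hb3 := k.isLt
    omega
  · intro h
    funext l
    simp only [xorf, eqp, lep]
    rw [bool_step]
    have := l.isLt; have := j.isLt; have := k.isLt; have := i.isLt
    simp only [Fin.ext_iff, Fin.le_def]
    omega

lemma L4 {i j k : Fin n} : xorf (lep j) (lep i) ≠ lep k := by
  intro h
  have hcl := congrFun h ⟨0, by have := i.isLt; omega⟩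
  simp only [xorf, eqp, lep] at hcl
  rw [bool_step] at hcl
  simp only [Fin.le_def, Fin.ext_iff] at hcl
  omega


end T

namespace T
variable {n : ℕ}

lemma classA {i : Fin n} (hi : 1 ≤ i.val) (p : Fin n → Bool) :
    (A p ∧ A (xorf p (lep i))) ↔
      (p = eqp i ∨
       (∃ h : i.val + 1 < n, p = eqp ⟨i.val + 1, h⟩ ∨ p = lep ⟨i.val + 1, h⟩) ∨
       p = lep ⟨i.val - 1, Nat.lt_of_le_of_lt (Nat.sub_le _ _) i.isLt⟩) := by
  constructor
  · rintro ⟨hp, hq⟩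
    have hq' : (∃ k, xorf p (lep i) = eqp k) ∨ (∃ k, xorf p (lep i) = lep k) := by
      rcases hq with ⟨k, hk⟩ | ⟨k, _, hk⟩
      · exact Or.inl ⟨k, hk⟩
      · exact Or.inr ⟨k, hk⟩
    have hp' : (∃ j, p = eqp j) ∨ (∃ j, p = lep j) := by
      rcases hp with ⟨j, hj⟩ | ⟨j, _, hj⟩
      · exact Or.inl ⟨j, hj⟩
      · exact Or.inr ⟨j, hj⟩
    rcases hp' with ⟨j, rfl⟩ | ⟨j, rfl⟩
    · rcases hq' with ⟨k, hk⟩ | ⟨k, hk⟩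
      · -- L1 : i = 1 ∧ j + k = 1
        obtain ⟨hi1, hjk⟩ := L1.mp hk
        rcases Nat.eq_zero_or_pos j.val with hj0 | hj1
        · -- j = 0 : p = lep ⟨i-1⟩ since i - 1 = 0
          refine Or.inr (Or.inr ?_)
          funext l
          simp only [eqp, lep]
          rw [decide_eq_decide, Fin.le_def, Fin.ext_iff]
          simp only []
          show l.val = j.val ↔ l.val ≤ i.val - 1
          omega
        · -- j = 1 = i
          exact Or.inl (congrArg eqp (Fin.ext (by omega)))
      · rcases L2.mp hk with ⟨h1, h2⟩ | ⟨h1, h2⟩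
        · exact Or.inl (congrArg eqp (Fin.ext h1))
        · refine Or.inr (Or.inl ⟨by omega, Or.inl (congrArg eqp (Fin.ext (by simpa using h1)))⟩)
    · rcases hq' with ⟨k, hk⟩ | ⟨k, hk⟩
      · rcases L3.mp hk with ⟨h1, h2⟩ | ⟨h1, h2⟩
        · refine Or.inr (Or.inl ⟨by omega, Or.inr (congrArg lep (Fin.ext (by simpa using h1)))⟩)
        · exact Or.inr (Or.inr (congrArg lep (Fin.ext (by simp; omega))))
      · exact absurd hk L4
  · intro h
    rcases h with rfl | ⟨hb, rfl | rfl⟩ | rfl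
    · refine ⟨A_eqp i, ?_⟩
      have : xorf (eqp i) (lep i) = lep ⟨i.val - 1, Nat.lt_of_le_of_lt (Nat.sub_le _ _) i.isLt⟩ :=
        L2.mpr (Or.inl ⟨rfl, by simp; omega⟩)
      rw [this]; exact A_lep _
    · refine ⟨A_eqp _, ?_⟩
      have : xorf (eqp (⟨i.val + 1, hb⟩ : Fin n)) (lep i) = lep ⟨i.val + 1, hb⟩ :=
        L2.mpr (Or.inr ⟨rfl, rfl⟩)
      rw [this]; exact A_lep _
    · refine ⟨A_lep _, ?_⟩
      have : xorf (lep (⟨i.val + 1, hb⟩ : Fin n)) (lep i) = eqp ⟨i.val + 1, hb⟩ :=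
        L3.mpr (Or.inl ⟨rfl, rfl⟩)
      rw [this]; exact A_eqp _
    · refine ⟨A_lep _, ?_⟩
      have : xorf (lep (⟨i.val - 1, Nat.lt_of_le_of_lt (Nat.sub_le _ _) i.isLt⟩ : Fin n)) (lep i)
          = eqp i := L3.mpr (Or.inr ⟨by simp; omega, rfl⟩)
      rw [this]; exact A_eqp _

end T


/-- common neighbours across a complement edge `u ū^i` of `AQ_n` (`n ≥ 2`).
Here `i : Fin n` with `1 ≤ i.val` encodes the (1-based) bit `i+1 ≥ 2`; for
`2 ≤ i+1 ≤ n-1` the common neighbours are `{u^i, u^{i+1}, ū^{i+1}, ū^{i-1}}`, and for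
bit `n` they are `{ū^{n-1}, u^n}`. -/
theorem stmt12 (n : ℕ) (hn : 2 ≤ n) (u : Fin n → Bool) (i : Fin n) (hi : 1 ≤ i.val) :
    (AQn n).neighborSet u ∩ (AQn n).neighborSet (cFlip u i) =
      if h : i.val + 1 < n then
        {hFlip u i, hFlip u ⟨i.val + 1, h⟩, cFlip u ⟨i.val + 1, h⟩,
          cFlip u ⟨i.val - 1, Nat.lt_of_le_of_lt (Nat.sub_le _ _) i.isLt⟩}
      else
        {cFlip u ⟨i.val - 1, Nat.lt_of_le_of_lt (Nat.sub_le _ _) i.isLt⟩, hFlip u i} := by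
  ext v
  rw [T.cFlip_eq u i, T.mem_inter]
  constructor
  · rintro ⟨p, hp1, hp2, rfl⟩
    rcases (T.classA hi p).mp ⟨hp1, hp2⟩ with rfl | ⟨hb, rfl | rfl⟩ | rfl
    · by_cases h : i.val + 1 < n
      · rw [dif_pos h]
        simp only [Set.mem_insert_iff, Set.mem_singleton_iff]
        exact Or.inl (T.hFlip_eq u i).symm
      · rw [dif_neg h]
        simp only [Set.mem_insert_iff, Set.mem_singleton_iff]
        exact Or.inr (T.hFlip_eq u i).symm
    · rw [dif_pos hb]
      simp only [Set.mem_insert_iff, Set.mem_singleton_iff]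
      exact Or.inr (Or.inl (T.hFlip_eq u _).symm)
    · rw [dif_pos hb]
      simp only [Set.mem_insert_iff, Set.mem_singleton_iff]
      exact Or.inr (Or.inr (Or.inl (T.cFlip_eq u _).symm))
    · by_cases h : i.val + 1 < n
      · rw [dif_pos h]
        simp only [Set.mem_insert_iff, Set.mem_singleton_iff]
        exact Or.inr (Or.inr (Or.inr (T.cFlip_eq u _).symm))
      · rw [dif_neg h]
        simp only [Set.mem_insert_iff, Set.mem_singleton_iff]
        exact Or.inl (T.cFlip_eq u _).symm
  · intro h
    by_cases hb : i.val + 1 < n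
    · rw [dif_pos hb] at h
      simp only [Set.mem_insert_iff, Set.mem_singleton_iff] at h
      rcases h with rfl | rfl | rfl | rfl
      · have hc := (T.classA hi (T.eqp i)).mpr (Or.inl rfl)
        exact ⟨T.eqp i, hc.1, hc.2, T.hFlip_eq u i⟩
      · have hc := (T.classA hi (T.eqp ⟨i.val + 1, hb⟩)).mpr (Or.inr (Or.inl ⟨hb, Or.inl rfl⟩))
        exact ⟨_, hc.1, hc.2, T.hFlip_eq u _⟩
      · have hc := (T.classA hi (T.lep ⟨i.val + 1, hb⟩)).mpr (Or.inr (Or.inl ⟨hb, Or.inr rfl⟩))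
        exact ⟨_, hc.1, hc.2, T.cFlip_eq u _⟩
      · have hc := (T.classA hi (T.lep ⟨i.val - 1, Nat.lt_of_le_of_lt (Nat.sub_le _ _) i.isLt⟩)).mpr
          (Or.inr (Or.inr rfl))
        exact ⟨_, hc.1, hc.2, T.cFlip_eq u _⟩
    · rw [dif_neg hb] at h
      simp only [Set.mem_insert_iff, Set.mem_singleton_iff] at h
      rcases h with rfl | rfl
      · have hc := (T.classA hi (T.lep ⟨i.val - 1, Nat.lt_of_le_of_lt (Nat.sub_le _ _) i.isLt⟩)).mpr
          (Or.inr (Or.inr rfl))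
        exact ⟨_, hc.1, hc.2, T.cFlip_eq u _⟩
      · have hc := (T.classA hi (T.eqp i)).mpr (Or.inl rfl)
        exact ⟨T.eqp i, hc.1, hc.2, T.hFlip_eq u i⟩
end
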